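/- Let c > 0 and v ∈ ℝ³ with 0 < ‖v‖ < c, and γ := (1 − ‖v‖²/c²)^{−1/2}. For w ∈ ℝ³ define w* := w/γ − (1 − γ)(⟨v, w⟩/(γ‖v‖²)) v. Let u : ℝ → ℝ³ be differentiable, let b(τ) := √(c² + ‖u(τ)‖²), a(τ) := u′(τ), and define u′ᵥ(τ) := γ( (u(τ))* − (v/c) b(τ) ). Then u′ᵥ is differentiable and (u′ᵥ)′(τ) = γ( (a(τ))* − (⟨u(τ), a(τ)⟩/(b(τ) c)) v ) for all τ. -/

import Mathlib

open scoped RealInnerProductSpace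

/-- The acceleration transformation law of the proper-time group
(equation (10) of the paper). With `w* := w/γ − (1 − γ)(⟨v,w⟩/(γ‖v‖²))v`,
`b(τ) := √(c² + ‖u(τ)‖²)`, `a := u′` and `u′ᵥ(τ) := γ((u(τ))* − (v/c)b(τ))`, the map
`u′ᵥ` is differentiable with
`(u′ᵥ)′(τ) = γ((a(τ))* − (⟨u(τ),a(τ)⟩/(b(τ)c))v)`. -/
theorem stmt11 (c : ℝ) (hc : 0 < c) (v : EuclideanSpace ℝ (Fin 3))
    (hv0 : 0 < ‖v‖) (hvc : ‖v‖ < c)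
    (γ : ℝ) (hγ : γ = (Real.sqrt (1 - ‖v‖ ^ 2 / c ^ 2))⁻¹)
    (star : EuclideanSpace ℝ (Fin 3) → EuclideanSpace ℝ (Fin 3))
    (hstar : star = fun w => γ⁻¹ • w - ((1 - γ) * (⟪v, w⟫ / (γ * ‖v‖ ^ 2))) • v)
    (u : ℝ → EuclideanSpace ℝ (Fin 3)) (hu : Differentiable ℝ u)
    (b : ℝ → ℝ) (hb : b = fun τ => Real.sqrt (c ^ 2 + ‖u τ‖ ^ 2))
    (a : ℝ → EuclideanSpace ℝ (Fin 3)) (ha : a = deriv u)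
    (u'v : ℝ → EuclideanSpace ℝ (Fin 3))
    (hu'v : u'v = fun τ => γ • (star (u τ) - (b τ / c) • v)) :
    Differentiable ℝ u'v ∧
    ∀ τ, deriv u'v τ = γ • (star (a τ) - (⟪u τ, a τ⟫ / (b τ * c)) • v) := by
  have hbpos : ∀ τ, 0 < b τ := by
    intro τ; rw [hb]
    exact Real.sqrt_pos.mpr (by positivity)
  have key : ∀ τ, HasDerivAt u'v (γ • (star (a τ) - (⟪u τ, a τ⟫ / (b τ * c)) • v)) τ := by
    intro τ
    have hua : HasDerivAt u (a τ) τ := by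
      rw [ha]; exact (hu τ).hasDerivAt
    -- derivative of inner ⟪v, u t⟫
    have hinner : HasDerivAt (fun t => ⟪v, u t⟫) ⟪v, a τ⟫ τ := by
      have := (hasDerivAt_const τ v).inner ℝ hua
      simpa using this
    -- derivative of ‖u t‖²
    have hnorm : HasDerivAt (fun t => ‖u t‖ ^ 2) (2 * ⟪u τ, a τ⟫) τ := by
      have h1 : HasDerivAt (fun t => ⟪u t, u t⟫) (⟪u τ, a τ⟫ + ⟪a τ, u τ⟫) τ :=
        hua.inner ℝ hua
      have h2 : (fun t => ⟪u t, u t⟫ : ℝ → ℝ) = fun t => ‖u t‖ ^ 2 := by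
        funext t; rw [real_inner_self_eq_norm_sq]
      rw [h2] at h1
      convert h1 using 1
      rw [real_inner_comm (u τ) (a τ)]; ring
    have hb' : HasDerivAt b (⟪u τ, a τ⟫ / b τ) τ := by
      have hg : HasDerivAt (fun t => c ^ 2 + ‖u t‖ ^ 2) (2 * ⟪u τ, a τ⟫) τ := by
        exact hnorm.const_add (c ^ 2)
      have hx : (c ^ 2 + ‖u τ‖ ^ 2) ≠ 0 := by positivity
      have hs := (Real.hasDerivAt_sqrt hx).comp τ hg
      rw [hb]
      convert hs using 1 <;> try rfl
      have hB : Real.sqrt (c ^ 2 + ‖u τ‖ ^ 2) = b τ := by rw [hb]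
      rw [hB]
      have hbne : b τ ≠ 0 := (hbpos τ).ne'
      generalize (⟪u τ, a τ⟫ : ℝ) = p
      field_simp
      rw [hB]
    -- assemble
    have hterm1 : HasDerivAt (fun t => γ⁻¹ • u t) (γ⁻¹ • a τ) τ := hua.const_smul γ⁻¹
    have hterm2 : HasDerivAt (fun t => ((1 - γ) * (⟪v, u t⟫ / (γ * ‖v‖ ^ 2))) • v)
        (((1 - γ) * (⟪v, a τ⟫ / (γ * ‖v‖ ^ 2))) • v) τ := by
      have h : HasDerivAt (fun t => (1 - γ) * (⟪v, u t⟫ / (γ * ‖v‖ ^ 2)))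
          ((1 - γ) * (⟪v, a τ⟫ / (γ * ‖v‖ ^ 2))) τ := by
        have := (hinner.div_const (γ * ‖v‖ ^ 2)).const_mul (1 - γ)
        simpa using this
      exact h.smul_const v
    have hterm3 : HasDerivAt (fun t => (b t / c) • v) ((⟪u τ, a τ⟫ / b τ / c) • v) τ :=
      (hb'.div_const c).smul_const v
    have hall : HasDerivAt u'v
        (γ • (γ⁻¹ • a τ - ((1 - γ) * (⟪v, a τ⟫ / (γ * ‖v‖ ^ 2))) • v
          - (⟪u τ, a τ⟫ / b τ / c) • v)) τ := by
      have h := (((hterm1.sub hterm2).sub hterm3).const_smul γ)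
      have heq : u'v = fun t => γ • (γ⁻¹ • u t - ((1 - γ) * (⟪v, u t⟫ / (γ * ‖v‖ ^ 2))) • v
          - (b t / c) • v) := by
        rw [hu'v, hstar]
      rw [heq]; exact h
    convert hall using 2
    rw [hstar]
    simp only [sub_sub, div_div]
  constructor
  · intro τ; exact (key τ).differentiableAt
  · intro τ; exact (key τ).deriv
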